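/- arXiv:1108.5148 — 2 statements merged into one kernel-verified Lean document; each statement's English description precedes it below -/
import Mathlib

section
/- Shannon's perfect-cipher keyspace bound: let K, M, C be finite types with M nonempty, let e : K → M → C be an encryption function such that e k : M → C is injective for every key k (decryption correctness), let κ be a probability mass function on K (the key distribution) and μ a probability mass function on M with μ m > 0 for all m (a full-support plaintext prior), with key and plaintext independent. If the scheme has perfect secrecy, i.e. for all plaintexts m, m' and all ciphertexts c, the probability over κ that the key k satisfies e k m = c equals the probability that e k m' = c, then |K| ≥ |M|. -/
/-- Shannon's perfect-cipher keyspace bound: for finite types `K`, `M`, `C` with `M`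
nonempty, an encryption function `e : K → M → C` that is injective in the plaintext for
every key (decryption correctness), a key distribution `κ`, and a full-support plaintext
prior `μ` chosen independently of the key, perfect secrecy (the distribution of the
ciphertext over the random key does not depend on the plaintext) implies `|K| ≥ |M|`. -/
theorem shannon_keyspace_bound (K M C : Type) [Fintype K] [Fintype M] [Fintype C]
    [Nonempty M]
    (e : K → M → C) (hinj : ∀ k, Function.Injective (e k))
    (κ : PMF K) (μ : PMF M) (hμ : ∀ m, 0 < μ m)
    (hperfect : ∀ (m m' : M) (c : C),
      (κ.map (fun k => e k m)) c = (κ.map (fun k => e k m')) c) :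
    Fintype.card M ≤ Fintype.card K := by
  classical
  obtain ⟨m₀⟩ := ‹Nonempty M›
  obtain ⟨k₀, hk₀⟩ := κ.support_nonempty
  set c : C := e k₀ m₀ with hc
  have hmem : ∀ m : M, ∃ k : K, e k m = c := by
    intro m
    have h1 : c ∈ (κ.map (fun k => e k m₀)).support := by
      rw [PMF.support_map]
      exact ⟨k₀, hk₀, rfl⟩
    have h2 : c ∈ (κ.map (fun k => e k m)).support := by
      rw [PMF.mem_support_iff] at h1 ⊢
      rw [hperfect m m₀ c]; exact h1
    rw [PMF.support_map] at h2
    obtain ⟨k, _, hk⟩ := h2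
    exact ⟨k, hk⟩
  choose f hf using hmem
  have hfinj : Function.Injective f := by
    intro m m' h
    have : e (f m) m = e (f m) m' := by rw [hf m, h, hf m']
    exact hinj (f m) this
  exact Fintype.card_le_of_injective f hfinj
end

section
/- Corollary to the Shannon bound for CD-PHY with block messages: let M ≥ 1 and n ≥ 1, let messages be n-symbol strings Fin n → Fin M, let keys be permutations σ of Fin M acting symbol-wise on messages (e σ m = σ ∘ m, which is injective in m for each σ). If there is a key distribution κ on Equiv.Perm (Fin M) and a full-support message prior μ (μ m > 0 for all m), with key independent of message, such that the scheme has perfect secrecy (for all messages m, m' and ciphertexts c, the probability over κ that σ ∘ m = c equals the probability that σ ∘ m' = c), then M^n ≤ M!. -/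
/-- Corollary to the Shannon bound for CD-PHY with block messages: messages are
`n`-symbol strings over an `M`-ary alphabet, keys are permutations of the alphabet acting
symbol-wise. If some key distribution `κ` and full-support message prior `μ` (independent
of the key) achieve perfect secrecy, then `M ^ n ≤ M!`. -/
theorem cdphy_block_message_bound (M n : ℕ) (hM : 1 ≤ M) (hn : 1 ≤ n)
    (κ : PMF (Equiv.Perm (Fin M))) (μ : PMF (Fin n → Fin M))
    (hμ : ∀ m, 0 < μ m)
    (hperfect : ∀ (m m' c : Fin n → Fin M),
      (κ.map (fun σ : Equiv.Perm (Fin M) => ⇑σ ∘ m)) c = (κ.map (fun σ : Equiv.Perm (Fin M) => ⇑σ ∘ m')) c) :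
    M ^ n ≤ Nat.factorial M := by
  classical
  set m0 : Fin n → Fin M := fun _ => ⟨0, hM⟩ with hm0
  obtain ⟨c, hc⟩ := (κ.map (fun σ : Equiv.Perm (Fin M) => ⇑σ ∘ m0)).support_nonempty
  have hall : ∀ m : Fin n → Fin M, ∃ σ : Equiv.Perm (Fin M), ⇑σ ∘ m = c := by
    intro m
    have hmem : c ∈ (κ.map (fun σ : Equiv.Perm (Fin M) => ⇑σ ∘ m)).support := by
      rw [PMF.mem_support_iff] at hc ⊢
      rw [hperfect m m0 c]; exact hc
    rw [PMF.support_map] at hmem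
    obtain ⟨σ, _, h⟩ := hmem
    exact ⟨σ, h⟩
  choose g hg using hall
  have hinj : Function.Injective g := by
    intro a b hab
    have h := (hg a).trans (hg b).symm
    rw [hab] at h
    funext i
    exact (g b).injective (congrFun h i)
  calc M ^ n = Fintype.card (Fin n → Fin M) := by simp [Fintype.card_fun]
    _ ≤ Fintype.card (Equiv.Perm (Fin M)) := Fintype.card_le_of_injective g hinj
    _ = Nat.factorial M := by simp [Fintype.card_perm]
end
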